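/- Let ξ be a square-integrable random variable, and let A ⊃ B be events with Pr(B) > 0. Then |E(ξ | A) − E(ξ | B)| ≤ ‖ξ‖₂ · (Pr(A \ B))^{1/2} / (Pr(A)^{1/2} Pr(B)^{1/2}) ≤ ‖ξ‖₂ / Pr(B)^{1/2}, where E(ξ | A) = E(1_A ξ)/Pr(A) and ‖ξ‖₂ = (E ξ²)^{1/2}. -/

import Mathlib

open MeasureTheory

private lemma cs_integral {Ω : Type*} [MeasurableSpace Ω] (μ : Measure Ω)
    (f g : Ω → ℝ) (hf : MemLp f 2 μ) (hg : MemLp g 2 μ) :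
    |∫ ω, f ω * g ω ∂μ| ≤ Real.sqrt (∫ ω, f ω ^ 2 ∂μ) * Real.sqrt (∫ ω, g ω ^ 2 ∂μ) := by
  set F : Lp ℝ 2 μ := hf.toLp f
  set G : Lp ℝ 2 μ := hg.toLp g
  have hFf : F =ᵐ[μ] f := hf.coeFn_toLp
  have hGg : G =ᵐ[μ] g := hg.coeFn_toLp
  have hinner : @inner ℝ _ _ F G = ∫ ω, f ω * g ω ∂μ := by
    rw [MeasureTheory.L2.inner_def]
    refine integral_congr_ae ?_
    filter_upwards [hFf, hGg] with ω h1 h2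
    simp [h1, h2, mul_comm]
  have hnF : ‖F‖ = Real.sqrt (∫ ω, f ω ^ 2 ∂μ) := by
    have : @inner ℝ _ _ F F = ∫ ω, f ω ^ 2 ∂μ := by
      rw [MeasureTheory.L2.inner_def]
      refine integral_congr_ae ?_
      filter_upwards [hFf] with ω h1
      simp [h1, sq]
    rw [← this, real_inner_self_eq_norm_mul_norm, Real.sqrt_mul_self (norm_nonneg _)]
  have hnG : ‖G‖ = Real.sqrt (∫ ω, g ω ^ 2 ∂μ) := by
    have : @inner ℝ _ _ G G = ∫ ω, g ω ^ 2 ∂μ := by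
      rw [MeasureTheory.L2.inner_def]
      refine integral_congr_ae ?_
      filter_upwards [hGg] with ω h1
      simp [h1, sq]
    rw [← this, real_inner_self_eq_norm_mul_norm, Real.sqrt_mul_self (norm_nonneg _)]
  calc |∫ ω, f ω * g ω ∂μ| = |@inner ℝ _ _ F G| := by rw [hinner]
    _ ≤ ‖F‖ * ‖G‖ := abs_real_inner_le_norm F G
    _ = _ := by rw [hnF, hnG]

/-- For a square-integrable `ξ` and events `B ⊆ A` with `Pr(B) > 0`,
`|E(ξ|A) − E(ξ|B)| ≤ ‖ξ‖₂ √(Pr(A∖B)) / (√Pr(A) √Pr(B)) ≤ ‖ξ‖₂ / √Pr(B)`,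
where `E(ξ|A) = E(1_A ξ)/Pr(A)` and `‖ξ‖₂ = (E ξ²)^{1/2}`. -/
theorem stmt_14 {Ω : Type*} [MeasurableSpace Ω] (μ : Measure Ω) [IsProbabilityMeasure μ]
    (ξ : Ω → ℝ) (hξ : MemLp ξ 2 μ)
    (A B : Set Ω) (hA : MeasurableSet A) (hB : MeasurableSet B)
    (hBA : B ⊆ A) (hBpos : 0 < μ B) :
    |(∫ ω in A, ξ ω ∂μ) / (μ A).toReal - (∫ ω in B, ξ ω ∂μ) / (μ B).toReal|
        ≤ Real.sqrt (∫ ω, ξ ω ^ 2 ∂μ) * Real.sqrt ((μ (A \ B)).toReal)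
            / (Real.sqrt ((μ A).toReal) * Real.sqrt ((μ B).toReal))
      ∧ Real.sqrt (∫ ω, ξ ω ^ 2 ∂μ) * Real.sqrt ((μ (A \ B)).toReal)
            / (Real.sqrt ((μ A).toReal) * Real.sqrt ((μ B).toReal))
          ≤ Real.sqrt (∫ ω, ξ ω ^ 2 ∂μ) / Real.sqrt ((μ B).toReal) := by
  set a := (μ A).toReal with ha_def
  set b := (μ B).toReal with hb_def
  set d := (μ (A \ B)).toReal with hd_def
  have hAfin : μ A ≠ ⊤ := measure_ne_top μ A
  have hBfin : μ B ≠ ⊤ := measure_ne_top μ B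
  have hb_pos : 0 < b := ENNReal.toReal_pos hBpos.ne' hBfin
  have ha_pos : 0 < a := lt_of_lt_of_le hb_pos
    (ENNReal.toReal_mono hAfin (measure_mono hBA))
  have hd_eq : d = a - b := by
    rw [hd_def, measure_diff hBA hB.nullMeasurableSet hBfin, ha_def, hb_def,
      ENNReal.toReal_sub_of_le (measure_mono hBA) hAfin]
  have hd_nonneg : 0 ≤ d := ENNReal.toReal_nonneg
  -- the auxiliary function
  set g : Ω → ℝ := fun ω => b * A.indicator (fun _ => (1:ℝ)) ω
      - a * B.indicator (fun _ => (1:ℝ)) ω with hg_def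
  have hgmem : MemLp g 2 μ := by
    exact ((memLp_indicator_const 2 hA (1:ℝ) (Or.inr hAfin)).const_mul b).sub
      ((memLp_indicator_const 2 hB (1:ℝ) (Or.inr hBfin)).const_mul a)
  have hξint : Integrable ξ μ := hξ.integrable (by norm_num)
  -- integral of ξ * g
  have hint1 : ∫ ω, ξ ω * g ω ∂μ
      = b * ∫ ω in A, ξ ω ∂μ - a * ∫ ω in B, ξ ω ∂μ := by
    have heq : (fun ω => ξ ω * g ω)
        = fun ω => b * A.indicator ξ ω - a * B.indicator ξ ω := by
      funext ω
      by_cases hωA : ω ∈ A <;> by_cases hωB : ω ∈ B <;>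
        simp [hg_def, Set.indicator_of_mem, Set.indicator_of_notMem, hωA, hωB] <;> ring
    rw [heq, integral_sub ((hξint.indicator hA).const_mul b)
        ((hξint.indicator hB).const_mul a),
      integral_const_mul, integral_const_mul, integral_indicator hA, integral_indicator hB]
  -- integral of g^2
  have hint2 : ∫ ω, g ω ^ 2 ∂μ = a * b * d := by
    have heq : (fun ω => g ω ^ 2)
        = fun ω => A.indicator (fun _ => b ^ 2) ω
            + B.indicator (fun _ => a ^ 2 - 2 * a * b) ω := by
      funext ω
      by_cases hωB : ω ∈ B
      · have hωA : ω ∈ A := hBA hωB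
        simp [hg_def, Set.indicator_of_mem, hωA, hωB]; ring
      · by_cases hωA : ω ∈ A <;>
          simp [hg_def, Set.indicator_of_mem, Set.indicator_of_notMem, hωA, hωB]
    rw [heq, integral_add ((integrable_const _).indicator hA) ((integrable_const _).indicator hB),
      integral_indicator_const _ hA, integral_indicator_const _ hB]
    simp only [smul_eq_mul, measureReal_def, ← ha_def, ← hb_def]
    rw [hd_eq]; ring
  have hcs := cs_integral μ ξ g hξ hgmem
  rw [hint1, hint2] at hcs
  have hsq_nonneg : 0 ≤ ∫ ω, ξ ω ^ 2 ∂μ := integral_nonneg fun ω => sq_nonneg _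
  set S := Real.sqrt (∫ ω, ξ ω ^ 2 ∂μ) with hS_def
  have hS_nonneg : 0 ≤ S := Real.sqrt_nonneg _
  have hsqrt_abd : Real.sqrt (a * b * d)
      = Real.sqrt a * Real.sqrt b * Real.sqrt d := by
    rw [Real.sqrt_mul (by positivity), Real.sqrt_mul ha_pos.le]
  constructor
  · have hlhs : (∫ ω in A, ξ ω ∂μ) / a - (∫ ω in B, ξ ω ∂μ) / b
        = (b * ∫ ω in A, ξ ω ∂μ - a * ∫ ω in B, ξ ω ∂μ) / (a * b) := by
      field_simp
    rw [hlhs, abs_div, abs_of_pos (by positivity : (0:ℝ) < a * b), div_le_div_iff₀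
      (by positivity) (by positivity : (0:ℝ) < Real.sqrt a * Real.sqrt b)]
    have hab : a * b = (Real.sqrt a * Real.sqrt b) ^ 2 := by
      rw [mul_pow, Real.sq_sqrt ha_pos.le, Real.sq_sqrt hb_pos.le]
    calc |b * ∫ ω in A, ξ ω ∂μ - a * ∫ ω in B, ξ ω ∂μ| * (Real.sqrt a * Real.sqrt b)
        ≤ S * Real.sqrt (a * b * d) * (Real.sqrt a * Real.sqrt b) := by
          apply mul_le_mul_of_nonneg_right hcs (by positivity)
      _ = S * Real.sqrt d * (a * b) := by rw [hsqrt_abd, hab]; ring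
  · have hd_le : Real.sqrt d ≤ Real.sqrt a :=
      Real.sqrt_le_sqrt (by rw [hd_eq]; linarith)
    rw [div_le_div_iff₀ (by positivity) (by positivity)]
    have h1 : S * Real.sqrt d ≤ S * Real.sqrt a :=
      mul_le_mul_of_nonneg_left hd_le hS_nonneg
    have hsb : 0 ≤ Real.sqrt b := Real.sqrt_nonneg _
    nlinarith [Real.sqrt_nonneg a, Real.sqrt_nonneg d]
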